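/- The velocity field u of the Stokes flow past a sphere is divergence-free away from the origin: for every x ∈ ℝ³ with x ≠ 0, u is differentiable at x and ∂u₁/∂x₁(x) + ∂u₂/∂x₂(x) + ∂u₃/∂x₃(x) = 0. -/

import Mathlib

open EuclideanSpace

local notation "E3" => EuclideanSpace ℝ (Fin 3)

lemma norm_hasFDerivAt' {x : E3} (hx : x ≠ 0) :
    HasFDerivAt (fun y : E3 => ‖y‖) (‖x‖⁻¹ • innerSL ℝ x) x := by
  have hn : ‖x‖ ≠ 0 := norm_ne_zero_iff.mpr hx
  have h2 : HasFDerivAt (fun y : E3 => ‖y‖ ^ 2) (2 • innerSL ℝ x) x := by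
    simpa using (hasFDerivAt_id x).norm_sq
  have h3 := h2.sqrt (by positivity)
  have hf : (fun y : E3 => Real.sqrt (‖y‖ ^ 2)) = fun y : E3 => ‖y‖ := by
    funext y; exact Real.sqrt_sq (norm_nonneg y)
  rw [hf] at h3
  have hd : (1 / (2 * Real.sqrt (‖x‖ ^ 2))) • (2 • innerSL ℝ x)
      = ‖x‖⁻¹ • innerSL ℝ x := by
    rw [Real.sqrt_sq (norm_nonneg x)]
    ext y
    simp only [ContinuousLinearMap.coe_smul', Pi.smul_apply, smul_eq_mul]
    field_simp
    ring
  rwa [hd] at h3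



/-- The velocity field of the analytical Stokes flow past a sphere of radius `R` in a
uniform stream of speed `v∞` (Cartesian form). -/
noncomputable def stokesSphereVelocity (R v : ℝ) (x : EuclideanSpace ℝ (Fin 3)) :
    EuclideanSpace ℝ (Fin 3) :=
  v • EuclideanSpace.single (0 : Fin 3) (1 : ℝ) -
    (3 * R * v / 4) • ((1 / ‖x‖) • EuclideanSpace.single (0 : Fin 3) (1 : ℝ) +
      (x 0 / ‖x‖ ^ 3) • x) -
    (R ^ 3 * v / 4) • ((1 / ‖x‖ ^ 3) • EuclideanSpace.single (0 : Fin 3) (1 : ℝ) -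
      (3 * x 0 / ‖x‖ ^ 5) • x)

/-- The pressure field of the analytical Stokes flow past a sphere of radius `R` in a
uniform stream of speed `v∞`, kinematic viscosity `ν` and far-field pressure `pinf`. -/
noncomputable def stokesSpherePressure (R ν v pinf : ℝ) (x : EuclideanSpace ℝ (Fin 3)) : ℝ :=
  pinf - (3 * ν * R * v / 2) * x 0 / ‖x‖ ^ 3

/-- The velocity field of the Stokes flow past a sphere is divergence-free away from the
origin: for every `x ≠ 0`, `u` is differentiable at `x` and
`∂u₁/∂x₁(x) + ∂u₂/∂x₂(x) + ∂u₃/∂x₃(x) = 0`. -/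
theorem stokesSphereVelocity_div_free (R v : ℝ) (hR : 0 < R)
    (x : EuclideanSpace ℝ (Fin 3)) (hx : x ≠ 0) :
    DifferentiableAt ℝ (stokesSphereVelocity R v) x ∧
      fderiv ℝ (stokesSphereVelocity R v) x (EuclideanSpace.single 0 1) 0 +
        fderiv ℝ (stokesSphereVelocity R v) x (EuclideanSpace.single 1 1) 1 +
        fderiv ℝ (stokesSphereVelocity R v) x (EuclideanSpace.single 2 1) 2 = 0 := by
  have hn : ‖x‖ ≠ 0 := norm_ne_zero_iff.mpr hx
  have N := norm_hasFDerivAt' hx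
  have P : HasFDerivAt (fun y : E3 => y 0) (EuclideanSpace.proj (0 : Fin 3) : E3 →L[ℝ] ℝ) x := by
    have h : HasFDerivAt (⇑(EuclideanSpace.proj (0 : Fin 3) : E3 →L[ℝ] ℝ))
        (EuclideanSpace.proj (0 : Fin 3) : E3 →L[ℝ] ℝ) x := ContinuousLinearMap.hasFDerivAt _
    exact h
  have I1 : HasFDerivAt (fun y : E3 => ‖y‖⁻¹) ((-(‖x‖ ^ 2)⁻¹) • (‖x‖⁻¹ • innerSL ℝ x)) x :=
    (hasDerivAt_inv hn).comp_hasFDerivAt x N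
  have I3 : HasFDerivAt (fun y : E3 => (‖y‖ ^ 3)⁻¹)
      ((-(3 * ‖x‖ ^ 2) / (‖x‖ ^ 3) ^ 2) • (‖x‖⁻¹ • innerSL ℝ x)) x := by
    have h1 : HasDerivAt (fun t : ℝ => (t ^ 3)⁻¹) (-(3 * ‖x‖ ^ 2) / (‖x‖ ^ 3) ^ 2) ‖x‖ := by
      simpa [Pi.inv_def] using (hasDerivAt_pow 3 ‖x‖).inv (pow_ne_zero 3 hn)
    exact h1.comp_hasFDerivAt x N
  have I5 : HasFDerivAt (fun y : E3 => (‖y‖ ^ 5)⁻¹)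
      ((-(5 * ‖x‖ ^ 4) / (‖x‖ ^ 5) ^ 2) • (‖x‖⁻¹ • innerSL ℝ x)) x := by
    have h1 : HasDerivAt (fun t : ℝ => (t ^ 5)⁻¹) (-(5 * ‖x‖ ^ 4) / (‖x‖ ^ 5) ^ 2) ‖x‖ := by
      simpa [Pi.inv_def] using (hasDerivAt_pow 5 ‖x‖).inv (pow_ne_zero 5 hn)
    exact h1.comp_hasFDerivAt x N
  have A2 := P.mul I3
  have B2 := (P.const_mul (3 : ℝ)).mul I5
  have S1 := I1.smul_const (EuclideanSpace.single (0 : Fin 3) (1 : ℝ))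
  have S2 := A2.smul (hasFDerivAt_id x)
  have T1 := I3.smul_const (EuclideanSpace.single (0 : Fin 3) (1 : ℝ))
  have T2 := B2.smul (hasFDerivAt_id x)
  have Hg := ((hasFDerivAt_const (v • EuclideanSpace.single (0 : Fin 3) (1 : ℝ)) x).sub
      ((S1.add S2).const_smul (3 * R * v / 4))).sub ((T1.sub T2).const_smul (R ^ 3 * v / 4))
  have Hu := Hg.congr_of_eventuallyEq (Filter.Eventually.of_forall fun y => by
    show stokesSphereVelocity R v y = _
    simp only [stokesSphereVelocity, one_div, div_eq_mul_inv, one_mul, id_eq,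
      Pi.sub_apply, Pi.add_apply, Pi.smul_apply, Pi.mul_apply, Pi.smul_apply'])
  refine ⟨Hu.differentiableAt, ?_⟩
  rw [Hu.fderiv]
  have hx2 : x 0 ^ 2 + x 1 ^ 2 + x 2 ^ 2 = ‖x‖ ^ 2 := by
    rw [EuclideanSpace.norm_eq, Real.sq_sqrt (by positivity)]
    simp [Fin.sum_univ_three, Real.norm_eq_abs, sq_abs]
  simp only [ContinuousLinearMap.coe_sub', Pi.sub_apply, ContinuousLinearMap.coe_smul',
    Pi.smul_apply, ContinuousLinearMap.add_apply, ContinuousLinearMap.coe_add',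
    ContinuousLinearMap.smulRight_apply, ContinuousLinearMap.zero_apply,
    ContinuousLinearMap.coe_id', id_eq, innerSL_apply_apply, EuclideanSpace.inner_single_right,
    conj_trivial, PiLp.proj_apply, smul_eq_mul, PiLp.sub_apply, PiLp.add_apply,
    PiLp.smul_apply, EuclideanSpace.single_apply, mul_one, Pi.add_apply, Pi.sub_apply,
    PiLp.zero_apply, Pi.zero_apply, Fin.isValue]
  norm_num [Fin.ext_iff]
  field_simp
  linear_combination (9 * R * v * x 0 * ‖x‖ ^ 2 - 15 * R ^ 3 * v * x 0) * hx2
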